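/- Let Φ₁, Φ₂ be strictly plurisubharmonic quadratic weights on ℂ with associated quantities a = α₂/α₁ and b = |β₂−β₁|/α₁. Define the model weights Φ₀(z) = |z|²/2 and Φ̃(z) = (a|z|² − b·Re(z²))/2. Then the embedding norms coincide: sup{‖u‖_{Φ₂}/‖u‖_{Φ₁} : u entire, 0 < ‖u‖_{Φ₁} < ∞} = sup{‖u‖_{Φ̃}/‖u‖_{Φ₀} : u entire, 0 < ‖u‖_{Φ₀} < ∞} (as elements of [0,∞]). -/

import Mathlib

open MeasureTheory

lemma det_mulLeft (c : ℂ) : LinearMap.det (LinearMap.mulLeft ℝ c) = Complex.normSq c := by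
  have h : LinearMap.toMatrix Complex.basisOneI Complex.basisOneI (LinearMap.mulLeft ℝ c) =
      !![c.re, -c.im; c.im, c.re] := by
    ext i j
    fin_cases i <;> fin_cases j <;>
      simp [LinearMap.toMatrix_apply, Complex.coe_basisOneI_repr, Complex.mul_re, Complex.mul_im]
  rw [← LinearMap.det_toMatrix Complex.basisOneI, h, Matrix.det_fin_two_of, Complex.normSq_apply]
  ring

lemma lintegral_comp_const_mul' (c : ℂ) (hc : c ≠ 0) (g : ℂ → ENNReal) :
    ∫⁻ z : ℂ, g (c * z) = ENNReal.ofReal (Complex.normSq c)⁻¹ * ∫⁻ z : ℂ, g z := by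
  have hd : LinearMap.det (LinearMap.mulLeft ℝ c) ≠ 0 := by
    rw [det_mulLeft]; exact_mod_cast ne_of_gt (Complex.normSq_pos.2 hc)
  have hmap : Measure.map (fun z : ℂ => c * z) volume =
      ENNReal.ofReal (Complex.normSq c)⁻¹ • (volume : Measure ℂ) := by
    have := Measure.map_linearMap_addHaar_eq_smul_addHaar (volume : Measure ℂ) hd
    rw [det_mulLeft] at this
    have habs : |(Complex.normSq c : ℝ)⁻¹| = (Complex.normSq c)⁻¹ :=
      abs_of_nonneg (inv_nonneg.2 (Complex.normSq_nonneg c))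
    rw [habs] at this
    have : ⇑(LinearMap.mulLeft ℝ c) = fun z : ℂ => c * z := by
      ext z; simp [LinearMap.mulLeft_apply]
    rwa [this] at *
  have e : ℂ ≃ᵐ ℂ := (Homeomorph.mulLeft₀ c hc).toMeasurableEquiv
  have he : ⇑((Homeomorph.mulLeft₀ c hc).toMeasurableEquiv) = fun z => c * z := rfl
  calc ∫⁻ z : ℂ, g (c * z)
      = ∫⁻ z, g z ∂(Measure.map (fun z : ℂ => c * z) volume) := by
        rw [← he]; exact (lintegral_map_equiv g ((Homeomorph.mulLeft₀ c hc).toMeasurableEquiv)).symm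
    _ = ENNReal.ofReal (Complex.normSq c)⁻¹ * ∫⁻ z : ℂ, g z := by
        rw [hmap, lintegral_smul_measure, smul_eq_mul]


/-- The Gaussian-weighted `L²` norm of a function on `ℂ`, valued in `[0,∞]`. -/
noncomputable def wnorm (Φ : ℂ → ℝ) (f : ℂ → ℂ) : ENNReal :=
  (∫⁻ z : ℂ, ENNReal.ofReal (‖f z‖ ^ 2 * Real.exp (-2 * Φ z))) ^ (1 / 2 : ℝ)

lemma wnorm_transform (c γ : ℂ) (hc : c ≠ 0) (Φ Ψ : ℂ → ℝ)
    (h : ∀ z : ℂ, Φ (c * z) = Ψ z - (γ * z ^ 2).re) (u : ℂ → ℂ) :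
    wnorm Ψ (fun z => u (c * z) * Complex.exp (γ * z ^ 2)) =
      ENNReal.ofReal (Complex.normSq c)⁻¹ ^ (1 / 2 : ℝ) * wnorm Φ u := by
  unfold wnorm
  rw [← ENNReal.mul_rpow_of_nonneg _ _ (by norm_num : (0:ℝ) ≤ 1 / 2)]
  congr 1
  rw [← lintegral_comp_const_mul' c hc
    (fun z => ENNReal.ofReal (‖u z‖ ^ 2 * Real.exp (-2 * Φ z)))]
  refine lintegral_congr fun z => ?_
  congr 1
  rw [norm_mul, mul_pow, Complex.norm_exp, h z]
  rw [mul_assoc, sq (Real.exp _), ← Real.exp_add, ← Real.exp_add]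
  ring_nf


/-- The norm of the embedding `H_{Φ₁} ↪ H_{Φ₂}`: the supremum of `‖u‖_{Φ₂}/‖u‖_{Φ₁}`
over entire `u` with `0 < ‖u‖_{Φ₁} < ∞`, valued in `[0,∞]`. -/
noncomputable def embNorm (Φ₁ Φ₂ : ℂ → ℝ) : ENNReal :=
  ⨆ u ∈ {u : ℂ → ℂ | Differentiable ℂ u ∧ 0 < wnorm Φ₁ u ∧ wnorm Φ₁ u < ⊤},
    wnorm Φ₂ u / wnorm Φ₁ u

/-- the embedding norm between two strictly plurisubharmonic quadratic
weights coincides with the embedding norm between the model weights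
`Φ₀(z) = |z|²/2` and `Φ̃(z) = (a|z|² - b Re(z²))/2`. -/
theorem embNorm_eq_model
    (α₁ α₂ : ℝ) (β₁ β₂ : ℂ) (hα₁ : 0 < α₁) (hα₂ : 0 < α₂)
    (Φ₁ Φ₂ : ℂ → ℝ)
    (hΦ₁ : ∀ z : ℂ, Φ₁ z = α₁ * ‖z‖ ^ 2 + (β₁ * z ^ 2).re)
    (hΦ₂ : ∀ z : ℂ, Φ₂ z = α₂ * ‖z‖ ^ 2 + (β₂ * z ^ 2).re)
    (a b : ℝ) (ha : a = α₂ / α₁) (hb : b = ‖β₂ - β₁‖ / α₁)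
    (Φ₀ Φt : ℂ → ℝ)
    (hΦ₀ : ∀ z : ℂ, Φ₀ z = ‖z‖ ^ 2 / 2)
    (hΦt : ∀ z : ℂ, Φt z = (a * ‖z‖ ^ 2 - b * (z ^ 2).re) / 2) :
    embNorm Φ₁ Φ₂ = embNorm Φ₀ Φt := by
  set w : ℂ := β₂ - β₁ with hw
  -- construction of the square root `c`
  set s : ℂ := if w = 0 then ((2 * α₁)⁻¹ : ℝ)
    else -((starRingEnd ℂ) w) / ((2 * α₁ * ‖w‖ : ℝ)) with hs
  have hα₁' : (α₁ : ℝ) ≠ 0 := ne_of_gt hα₁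
  have habs_s : ‖s‖ = (2 * α₁)⁻¹ := by
    by_cases h0 : w = 0
    · rw [hs, if_pos h0, Complex.norm_real, Real.norm_eq_abs, abs_of_nonneg (by positivity)]
    · have hwabs : ‖w‖ ≠ 0 := norm_ne_zero_iff.mpr h0
      rw [hs, if_neg h0, norm_div, norm_neg, Complex.norm_conj, Complex.norm_real, Real.norm_eq_abs,
        abs_of_nonneg (by positivity)]
      field_simp
  have hs0 : s ≠ 0 := by
    intro h
    rw [h, norm_zero] at habs_s
    have : (0:ℝ) < (2*α₁)⁻¹ := by positivity
    exact this.ne' habs_s.symm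
  have hws : w * s = ((-(‖w‖) / (2 * α₁) : ℝ) : ℂ) := by
    by_cases h0 : w = 0
    · rw [h0]; simp [h0]
    · have hwabs : (‖w‖ : ℝ) ≠ 0 := norm_ne_zero_iff.mpr h0
      have hA : ((‖w‖ : ℝ) : ℂ) ≠ 0 := Complex.ofReal_ne_zero.mpr hwabs
      have hB : ((α₁ : ℝ) : ℂ) ≠ 0 := Complex.ofReal_ne_zero.mpr hα₁'
      have key : w * (starRingEnd ℂ) w = ((‖w‖ ^ 2 : ℝ) : ℂ) := by
        rw [Complex.mul_conj, Complex.normSq_eq_norm_sq]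
      have hD : ((2 * α₁ * ‖w‖ : ℝ) : ℂ) ≠ 0 := by
        push_cast; exact mul_ne_zero (mul_ne_zero two_ne_zero hB) hA
      rw [hs, if_neg h0, ← mul_div_assoc, div_eq_iff hD, mul_neg, key]
      push_cast
      field_simp
  obtain ⟨c, hc2⟩ := IsAlgClosed.exists_pow_nat_eq s (by norm_num : 0 < 2)
  have hc : c ≠ 0 := by
    intro h; rw [h] at hc2; simp at hc2; exact hs0 hc2.symm
  have hn : Complex.normSq c = (2 * α₁)⁻¹ := by
    rw [← Complex.sq_norm, ← norm_pow, hc2, habs_s]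
  set γ : ℂ := -(β₁ * c ^ 2) with hγ
  have habs_mul : ∀ z : ℂ, ‖c * z‖ ^ 2 = Complex.normSq c * ‖z‖ ^ 2 := by
    intro z
    rw [norm_mul, mul_pow, Complex.sq_norm c]
  have h₁ : ∀ z : ℂ, Φ₁ (c * z) = Φ₀ z - (γ * z ^ 2).re := by
    intro z
    rw [hΦ₁, hΦ₀, habs_mul, hn]
    have : (γ * z ^ 2).re = -((β₁ * ((c * z) ^ 2)).re) := by
      rw [hγ]; rw [mul_pow]; rw [neg_mul]; rw [Complex.neg_re]; ring_nf
    rw [this]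
    field_simp
    ring
  have h₂ : ∀ z : ℂ, Φ₂ (c * z) = Φt z - (γ * z ^ 2).re := by
    intro z
    rw [hΦ₂, hΦt, habs_mul, hn]
    have hβ₂ : β₂ = β₁ + w := by rw [hw]; ring
    have hre : (β₂ * (c * z) ^ 2).re = (β₁ * (c ^ 2 * z ^ 2)).re
        + (-‖w‖ / (2 * α₁)) * (z ^ 2).re := by
      rw [hβ₂, mul_pow]
      rw [add_mul, Complex.add_re]
      congr 1
      have : w * (c ^ 2 * z ^ 2) = ((-‖w‖ / (2 * α₁) : ℝ) : ℂ) * z ^ 2 := by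
        rw [← mul_assoc, hc2, hws]
      rw [this, Complex.re_ofReal_mul]
    rw [hre]
    have hγre : (γ * z ^ 2).re = -((β₁ * (c ^ 2 * z ^ 2)).re) := by
      rw [hγ, neg_mul, Complex.neg_re, mul_assoc]
    rw [hγre, ha, hb]
    field_simp
    ring
  set K : ENNReal := ENNReal.ofReal (Complex.normSq c)⁻¹ ^ (1 / 2 : ℝ) with hK
  have hnpos : (0:ℝ) < (Complex.normSq c)⁻¹ := by rw [hn]; positivity
  have hK0 : K ≠ 0 := by
    rw [hK]
    exact (ENNReal.rpow_pos (ENNReal.ofReal_pos.mpr hnpos) ENNReal.ofReal_ne_top).ne'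
  have hKt : K ≠ ⊤ := by
    rw [hK]
    exact ENNReal.rpow_ne_top_of_nonneg (by norm_num) ENNReal.ofReal_ne_top
  unfold embNorm
  apply le_antisymm
  · refine iSup₂_le fun u hu => ?_
    obtain ⟨hud, hu0, hut⟩ := hu
    have hv0 := wnorm_transform c γ hc Φ₁ Φ₀ h₁ u
    have hvt := wnorm_transform c γ hc Φ₂ Φt h₂ u
    have hvd : Differentiable ℂ (fun z => u (c * z) * Complex.exp (γ * z ^ 2)) :=
      (hud.comp (differentiable_id.const_mul c)).mul
        (((differentiable_pow 2).const_mul γ).cexp)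
    refine le_iSup₂_of_le (fun z => u (c * z) * Complex.exp (γ * z ^ 2))
      ⟨hvd, ?_, ?_⟩ (le_of_eq ?_)
    · rw [hv0]; exact ENNReal.mul_pos hK0 hu0.ne'
    · rw [hv0]; exact ENNReal.mul_lt_top hKt.lt_top hut
    · rw [hv0, hvt, ENNReal.mul_div_mul_left _ _ hK0 hKt]
  · refine iSup₂_le fun v hv => ?_
    obtain ⟨hvd, hv0, hvt⟩ := hv
    set p : ℂ → ℂ := fun z => v (c⁻¹ * z) * Complex.exp (β₁ * z ^ 2) with hp
    have hup : (fun z => p (c * z) * Complex.exp (γ * z ^ 2)) = v := by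
      funext z
      rw [hp]
      simp only []
      rw [inv_mul_cancel_left₀ hc, mul_assoc, ← Complex.exp_add]
      have : β₁ * (c * z) ^ 2 + γ * z ^ 2 = 0 := by rw [hγ]; ring
      rw [this, Complex.exp_zero, mul_one]
    have hpd : Differentiable ℂ p :=
      (hvd.comp (differentiable_id.const_mul c⁻¹)).mul
        (((differentiable_pow 2).const_mul β₁).cexp)
    have key0 : wnorm Φ₀ v = K * wnorm Φ₁ p := by
      rw [← hup]; exact wnorm_transform c γ hc Φ₁ Φ₀ h₁ p
    have keyt : wnorm Φt v = K * wnorm Φ₂ p := by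
      rw [← hup]; exact wnorm_transform c γ hc Φ₂ Φt h₂ p
    have hp0 : 0 < wnorm Φ₁ p := by
      rcases eq_or_ne (wnorm Φ₁ p) 0 with h | h
      · rw [key0, h, mul_zero] at hv0; exact absurd rfl hv0.ne
      · exact pos_iff_ne_zero.mpr h
    have hpt : wnorm Φ₁ p < ⊤ := by
      rcases eq_or_ne (wnorm Φ₁ p) ⊤ with h | h
      · rw [key0, h, ENNReal.mul_top hK0] at hvt
        exact absurd hvt (lt_irrefl ⊤)
      · exact h.lt_top
    refine le_iSup₂_of_le p ⟨hpd, hp0, hpt⟩ (le_of_eq ?_)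
    rw [key0, keyt, ENNReal.mul_div_mul_left _ _ hK0 hKt]
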